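/- For every a > 0 and every y ∈ Δ_a⁺, one has J(y) = {β_a}; that is, the only φ ∈ l∞ satisfying ⟨φ, y⟩ = ‖y‖₁² = ‖φ‖∞² is the constant sequence β_a. -/

import Mathlib

open scoped ENNReal

/-- The real Banach space `ℓ¹` of absolutely summable real sequences. -/
noncomputable abbrev ell1 : Type := lp (fun _ : ℕ => ℝ) 1

/-- The real Banach space `ℓ∞` of bounded real sequences (the dual of `ℓ¹`). -/
noncomputable abbrev ellInfty : Type := lp (fun _ : ℕ => ℝ) ∞

/-- The canonical pairing `⟨φ, x⟩ = ∑ₙ φₙ xₙ` between `ℓ∞` and `ℓ¹`. -/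
noncomputable def pairing (φ : ellInfty) (x : ell1) : ℝ := ∑' n, φ n * x n

/-- The constant sequence `β_a = (a, a, a, …) ∈ ℓ∞`. -/
noncomputable def betaSeq (a : ℝ) : ellInfty :=
  ⟨fun _ => a, memℓp_infty (bddAbove_singleton.mono Set.range_const_subset)⟩

/-- The set of best approximations of `x` from the closed ball of radius `r`
centered at the origin of `ℓ¹`: `P_{rB}(x) = {u ∈ rB : ‖x − u‖₁ ≤ ‖x − z‖₁ for all z ∈ rB}`. -/
def projBall (r : ℝ) (x : ell1) : Set ell1 :=
  {u : ell1 | ‖u‖ ≤ r ∧ ∀ z : ell1, ‖z‖ ≤ r → ‖x - u‖ ≤ ‖x - z‖}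

/-- `ψ` belongs to the Mordukhovich (Fréchet) coderivative `D̂*P(x, y)(φ)` of the set-valued map
`P : ℓ¹ ⇉ ℓ¹` at `(x, y)` evaluated at `φ`:
`limsup_{(u,v)→(x,y), v ∈ P(u)} (⟨ψ, u − x⟩ − ⟨φ, v − y⟩)/(‖u − x‖ + ‖v − y‖) ≤ 0`. -/
def inCoderiv (P : ell1 → Set ell1) (x y : ell1) (ψ φ : ellInfty) : Prop :=
  ∀ ε > (0 : ℝ), ∃ δ > (0 : ℝ), ∀ u v : ell1, v ∈ P u → ‖u - x‖ < δ → ‖v - y‖ < δ →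
    pairing ψ (u - x) - pairing φ (v - y) ≤ ε * (‖u - x‖ + ‖v - y‖)

/-- Proposition 3.1 (b). For every `a > 0` and every `y ∈ Δ_a⁺`,
`J(y) = {β_a}`: the only `φ ∈ ℓ∞` with `⟨φ, y⟩ = ‖y‖₁² = ‖φ‖∞²` is the constant sequence `β_a`. -/
theorem stmt_2 (a : ℝ) (ha : 0 < a) (y : ell1)
    (hy_pos : ∀ n, 0 < y n) (hy_sum : ∑' n, y n = a) :
    ∀ φ : ellInfty,
      (pairing φ y = ‖y‖ ^ 2 ∧ ‖y‖ ^ 2 = ‖φ‖ ^ 2) ↔ φ = betaSeq a := by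
  -- preliminaries
  have hys : Summable (fun n => y n) := by
    have h := (lp.memℓp y).summable (p := 1) (by norm_num)
    simp only [ENNReal.toReal_one, Real.rpow_one] at h
    exact h.of_norm
  have habs : ∀ n, ‖y n‖ = y n := fun n => Real.norm_of_nonneg (hy_pos n).le
  have hnormy : ‖y‖ = a := by
    have := lp.norm_eq_tsum_rpow (p := 1) (by norm_num) y
    simp only [ENNReal.toReal_one, Real.rpow_one, one_div, inv_one] at this
    rw [this]
    simp_rw [habs]
    exact hy_sum
  intro φ
  constructor
  · rintro ⟨h1, h2⟩
    have hφnorm : ‖φ‖ = a := by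
      have : ‖φ‖ ^ 2 = a ^ 2 := by rw [← h2, hnormy]
      nlinarith [norm_nonneg φ]
    have hle : ∀ n, φ n ≤ a := by
      intro n
      calc φ n ≤ ‖φ n‖ := le_abs_self _
        _ ≤ ‖φ‖ := lp.norm_apply_le_norm (by norm_num) φ n
        _ = a := hφnorm
    have hsum1 : Summable (fun n => φ n * y n) := by
      refine Summable.of_norm_bounded (hys.mul_left a) (fun n => ?_)
      rw [norm_mul, habs]
      exact mul_le_mul_of_nonneg_right
        ((lp.norm_apply_le_norm (by norm_num) φ n).trans hφnorm.le) (hy_pos n).le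
    have hsum2 : Summable (fun n => a * y n) := hys.mul_left a
    have hall : ∀ n, φ n = a := by
      by_contra hcon
      push_neg at hcon
      obtain ⟨k, hk⟩ := hcon
      have hklt : φ k < a := lt_of_le_of_ne (hle k) hk
      have hstrict : pairing φ y < ∑' n, a * y n := by
        exact Summable.tsum_lt_tsum (fun n => mul_le_mul_of_nonneg_right (hle n) (hy_pos n).le)
          (mul_lt_mul_of_pos_right hklt (hy_pos k)) hsum1 hsum2
      rw [tsum_mul_left, hy_sum, h1, hnormy] at hstrict
      nlinarith
    exact Subtype.ext (funext hall)
  · rintro rfl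
    have hpair : pairing (betaSeq a) y = a ^ 2 := by
      unfold pairing betaSeq
      simp only
      rw [tsum_mul_left, hy_sum]
      ring
    have hnormβ : ‖betaSeq a‖ = a := by
      rw [lp.norm_eq_ciSup]
      simp [betaSeq, Real.norm_of_nonneg ha.le, ciSup_const]
    refine ⟨by rw [hpair, hnormy], by rw [hnormy, hnormβ]⟩
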